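/- Let G=(V,E) be a finite simple graph and suppose V = V₁ ∪ V₂ with V₁ ∩ V₂ = {v} a single vertex, such that every edge of G has both endpoints in V₁ or both endpoints in V₂. Let G₁ and G₂ be the subgraphs of G induced on V₁ and V₂, with edge sets E₁ and E₂ (so E = E₁ ⊔ E₂). Then for every p : V → ℝ and q : E → ℝ, the pair (p,q) lies in COR(G) if and only if (p|_{V₁}, q|_{E₁}) ∈ COR(G₁) and (p|_{V₂}, q|_{E₂}) ∈ COR(G₂). Consequently, for every p : V → [0,1], the slice {q : (p,q) ∈ COR(G)} equals the product of the slices {q₁ : (p|_{V₁},q₁) ∈ COR(G₁)} and {q₂ : (p|_{V₂},q₂) ∈ COR(G₂)}, and its Lebesgue volume is the product of their volumes. -/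

import Mathlib

open MeasureTheory
noncomputable section
/-- The extremal point of the correlation polytope associated to a 0/1 assignment. -/
def corPoint {V : Type} (G : SimpleGraph V) (f : V → Bool) :
    (V → ℝ) × (G.edgeSet → ℝ) :=
  (fun i => if f i then 1 else 0,
   fun e => Sym2.lift ⟨fun i j => (if f i then (1 : ℝ) else 0) * (if f j then 1 else 0),
     fun _ _ => mul_comm _ _⟩ e.1)
/-- The correlation polytope `COR(G)` of a graph `G`. -/
def cor {V : Type} (G : SimpleGraph V) : Set ((V → ℝ) × (G.edgeSet → ℝ)) :=
  convexHull ℝ (Set.range (corPoint G))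
namespace CorAux

theorem mem_convexHull_range_iff {ι : Type} [Fintype ι] [DecidableEq ι] {E : Type*}
    [AddCommGroup E] [Module ℝ E] (g : ι → E) (x : E) :
    x ∈ convexHull ℝ (Set.range g) ↔
      ∃ w : ι → ℝ, (∀ i, 0 ≤ w i) ∧ ∑ i, w i = 1 ∧ ∑ i, w i • g i = x := by
  constructor
  · intro hx
    refine (convexHull_min ?_ ?_ : convexHull ℝ (Set.range g) ⊆
      {x : E | ∃ w : ι → ℝ, (∀ i, 0 ≤ w i) ∧ ∑ i, w i = 1 ∧ ∑ i, w i • g i = x}) hx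
    · rintro _ ⟨i, rfl⟩
      refine ⟨fun j => if j = i then 1 else 0, fun j => by dsimp; split <;> norm_num, by simp, ?_⟩
      simp [ite_smul]
    · rintro x ⟨wx, hx0, hx1, rfl⟩ y ⟨wy, hy0, hy1, rfl⟩ a b ha hb hab
      refine ⟨fun i => a * wx i + b * wy i,
        fun i => by have := hx0 i; have := hy0 i; positivity, ?_, ?_⟩
      · simp [Finset.sum_add_distrib, ← Finset.mul_sum, hx1, hy1, hab]
      · simp [add_smul, mul_smul, Finset.sum_add_distrib, ← Finset.smul_sum]
  · rintro ⟨w, h0, h1, rfl⟩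
    rw [← Finset.centerMass_eq_of_sum_1 _ _ h1]
    exact Finset.centerMass_mem_convexHull _ (fun i _ => h0 i) (by rw [h1]; norm_num)
      (fun i _ => Set.mem_range_self i)

theorem mem_cor_iff {V : Type} [Fintype V] [DecidableEq V] (G : SimpleGraph V)
    (p : V → ℝ) (q : G.edgeSet → ℝ) :
    (p, q) ∈ cor G ↔ ∃ w : (V → Bool) → ℝ, (∀ f, 0 ≤ w f) ∧ (∑ f, w f) = 1 ∧
      (∀ i, (∑ f, w f * (if f i then 1 else 0)) = p i) ∧
      (∀ e : G.edgeSet, (∑ f, w f * (corPoint G f).2 e) = q e) := by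
  rw [cor, mem_convexHull_range_iff]
  refine exists_congr fun w => and_congr_right fun h0 => and_congr_right fun h1 => ?_
  have key : ∑ f, w f • corPoint G f =
      ((fun i => ∑ f, w f * (if f i then 1 else 0)),
        fun e => ∑ f, w f * (corPoint G f).2 e) := by
    refine Prod.ext ?_ ?_
    · rw [Prod.fst_sum]
      funext i
      rw [Finset.sum_apply]
      simp [corPoint]
    · rw [Prod.snd_sum]
      funext e
      rw [Finset.sum_apply]
      simp
  rw [key, Prod.mk.injEq, funext_iff, funext_iff]

theorem induce_mem_edgeSet {V : Type} (G : SimpleGraph V) (s : Set V) {x y : V}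
    (h : s(x, y) ∈ G.edgeSet) (hx : x ∈ s) (hy : y ∈ s) :
    s((⟨x, hx⟩ : s), (⟨y, hy⟩ : s)) ∈ (G.induce s).edgeSet := by
  simpa using h

theorem mapEdgeSet_induce_mk {V : Type} (G : SimpleGraph V) (s : Set V) {x y : V}
    (hx : x ∈ s) (hy : y ∈ s) (h : s(x, y) ∈ G.edgeSet) :
    (SimpleGraph.Embedding.induce (G := G) s).mapEdgeSet
        ⟨s((⟨x, hx⟩ : s), ⟨y, hy⟩), induce_mem_edgeSet G s h hx hy⟩ = ⟨s(x, y), h⟩ := by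
  apply Subtype.ext
  simp [Sym2.map_pair_eq]

theorem mem_of_mem_mapEdgeSet {V : Type} (G : SimpleGraph V) (s : Set V)
    (e : (G.induce s).edgeSet) (x : V)
    (hx : x ∈ (((SimpleGraph.Embedding.induce (G := G) s).mapEdgeSet e : G.edgeSet) : Sym2 V)) :
    x ∈ s := by
  obtain ⟨es, he⟩ := e
  have : x ∈ Sym2.map Subtype.val es := hx
  obtain ⟨y, -, rfl⟩ := Sym2.mem_map.mp this
  exact y.2

theorem corPoint_res {V : Type} (G : SimpleGraph V) (s : Set V) (h : V → Bool)
    (e : (G.induce s).edgeSet) :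
    (corPoint (G.induce s) (fun i => h i.1)).2 e =
      (corPoint G h).2 ((SimpleGraph.Embedding.induce (G := G) s).mapEdgeSet e) := by
  obtain ⟨es, he⟩ := e
  induction es using Sym2.ind with
  | _ a b =>
    show _ = Sym2.lift _ (Sym2.map Subtype.val s(a, b))
    simp [corPoint, Sym2.map_pair_eq]



/-- glue two boolean assignments along a vertex decomposition -/
def glueFun {V : Type} (V₁ V₂ : Set V) [DecidablePred (· ∈ V₁)]
    (hmem : ∀ x, x ∉ V₁ → x ∈ V₂) (f : V₁ → Bool) (g : V₂ → Bool) (x : V) : Bool :=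
  if hx : x ∈ V₁ then f ⟨x, hx⟩ else g ⟨x, hmem x hx⟩

/-- marginal weight of the value `b` at coordinate `a` -/
def margFun {α : Type} [Fintype α] [DecidableEq α] (w : (α → Bool) → ℝ) (a : α) (b : Bool) : ℝ :=
  ∑ f : α → Bool, if f a = b then w f else 0

/-- the glued weight function -/
def glueWeight {V : Type} [Fintype V] [DecidableEq V] (V₁ V₂ : Set V) [DecidablePred (· ∈ V₁)]
    [DecidablePred (· ∈ V₂)] (v : V) (hv₁ : v ∈ V₁)
    (w₁ : (V₁ → Bool) → ℝ) (w₂ : (V₂ → Bool) → ℝ) (h : V → Bool) : ℝ :=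
  if margFun w₁ ⟨v, hv₁⟩ (h v) = 0 then 0
  else w₁ (fun i : V₁ => h i.1) * w₂ (fun j : V₂ => h j.1) / margFun w₁ ⟨v, hv₁⟩ (h v)

theorem ite_nonneg' {P : Prop} [Decidable P] {x : ℝ} (hx : 0 ≤ x) : 0 ≤ if P then x else 0 := by
  split
  exacts [hx, le_refl 0]

section marg
variable {α : Type} [Fintype α] [DecidableEq α] (w : (α → Bool) → ℝ) (a : α)

theorem margFun_nonneg (h0 : ∀ f, 0 ≤ w f) (b : Bool) : 0 ≤ margFun w a b := by
  rw [margFun]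
  exact Finset.sum_nonneg fun f _ => ite_nonneg' (h0 f)

theorem le_margFun (h0 : ∀ f, 0 ≤ w f) (f : α → Bool) : w f ≤ margFun w a (f a) := by
  rw [margFun]
  have := Finset.single_le_sum (f := fun f' : α → Bool => if f' a = f a then w f' else 0)
    (fun f' _ => ite_nonneg' (h0 f')) (Finset.mem_univ f)
  simpa using this

theorem margFun_true : margFun w a true = ∑ f : α → Bool, w f * (if f a then 1 else 0) := by
  refine Finset.sum_congr rfl fun f _ => ?_
  by_cases hf : f a <;> simp [hf]

theorem margFun_add : margFun w a true + margFun w a false = ∑ f : α → Bool, w f := by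
  rw [margFun, margFun, ← Finset.sum_add_distrib]
  refine Finset.sum_congr rfl fun f _ => ?_
  by_cases hf : f a <;> simp [hf]

end marg

section glue
variable {V : Type} [Fintype V] [DecidableEq V] (V₁ V₂ : Set V)
  [DecidablePred (· ∈ V₁)] [DecidablePred (· ∈ V₂)] (v : V)
  (hI : V₁ ∩ V₂ = {v}) (hv₁ : v ∈ V₁) (hv₂ : v ∈ V₂)
  (hmem : ∀ x, x ∉ V₁ → x ∈ V₂)

theorem res₁_glue (f : V₁ → Bool) (g : V₂ → Bool) :
    (fun i : V₁ => glueFun V₁ V₂ hmem f g i.1) = f := by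
  funext i
  simp only [glueFun, i.2, dif_pos]

include hI hv₁ hv₂ hmem in
theorem res₂_glue (f : V₁ → Bool) (g : V₂ → Bool) (hfg : f ⟨v, hv₁⟩ = g ⟨v, hv₂⟩) :
    (fun j : V₂ => glueFun V₁ V₂ hmem f g j.1) = g := by
  funext j
  by_cases hj : (j : V) ∈ V₁
  · have hjv : (j : V) = v := by
      have : (j : V) ∈ V₁ ∩ V₂ := ⟨hj, j.2⟩
      rw [hI] at this
      exact this
    have h1 : f ⟨(j : V), hj⟩ = f ⟨v, hv₁⟩ := by congr 1; exact Subtype.ext hjv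
    have h2 : g ⟨v, hv₂⟩ = g j := by congr 1; exact (Subtype.ext hjv).symm
    simp only [glueFun, dif_pos hj]
    rw [h1, hfg, h2]
  · simp only [glueFun, dif_neg hj]

theorem glue_at_v (f : V₁ → Bool) (g : V₂ → Bool) :
    glueFun V₁ V₂ hmem f g v = f ⟨v, hv₁⟩ := by
  simp only [glueFun, dif_pos hv₁]

include hI hv₁ hv₂ hmem in
theorem sum_glue (F : (V → Bool) → ℝ) :
    (∑ h : V → Bool, F h) =
      ∑ f : V₁ → Bool, ∑ g : V₂ → Bool,
        if f ⟨v, hv₁⟩ = g ⟨v, hv₂⟩ then F (glueFun V₁ V₂ hmem f g) else 0 := by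
  rw [← Finset.sum_product'
    (f := fun f g => if f ⟨v, hv₁⟩ = g ⟨v, hv₂⟩ then F (glueFun V₁ V₂ hmem f g) else 0),
    Finset.univ_product_univ, ← Finset.sum_filter]
  have hglue_res : ∀ h : V → Bool,
      glueFun V₁ V₂ hmem (fun i : V₁ => h i.1) (fun j : V₂ => h j.1) = h := by
    intro h
    funext x
    by_cases hx : x ∈ V₁ <;> simp only [glueFun, hx, dif_pos, dif_neg, not_false_iff]
  refine Finset.sum_nbij' (fun h => ((fun i : V₁ => h i.1), (fun j : V₂ => h j.1)))
    (fun fg => glueFun V₁ V₂ hmem fg.1 fg.2) ?_ ?_ ?_ ?_ ?_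
  · intro h _
    simp only [Finset.mem_filter, Finset.mem_univ, true_and]
  · intro fg _
    exact Finset.mem_univ _
  · intro h _
    exact hglue_res h
  · intro fg hfg
    simp only [Finset.mem_filter, Finset.mem_univ, true_and] at hfg
    exact Prod.ext (res₁_glue V₁ V₂ hmem fg.1 fg.2) (res₂_glue V₁ V₂ v hI hv₁ hv₂ hmem fg.1 fg.2 hfg)
  · intro h _
    exact congrArg F (hglue_res h).symm

variable (w₁ : (V₁ → Bool) → ℝ) (w₂ : (V₂ → Bool) → ℝ)
  (h10 : ∀ f, 0 ≤ w₁ f) (h20 : ∀ g, 0 ≤ w₂ g)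
  (hmarg : ∀ b, margFun w₂ ⟨v, hv₂⟩ b = margFun w₁ ⟨v, hv₁⟩ b)

include hI hv₂ hmem h10 h20 hmarg in
theorem glue_L1 (ψ : (V₁ → Bool) → ℝ) :
    (∑ h : V → Bool, glueWeight V₁ V₂ v hv₁ w₁ w₂ h * ψ (fun i : V₁ => h i.1))
      = ∑ f : V₁ → Bool, w₁ f * ψ f := by
  rw [sum_glue V₁ V₂ v hI hv₁ hv₂ hmem]
  refine Finset.sum_congr rfl fun f _ => ?_
  by_cases hc : margFun w₁ ⟨v, hv₁⟩ (f ⟨v, hv₁⟩) = 0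
  · have hw₁ : w₁ f = 0 := le_antisymm (hc ▸ le_margFun w₁ (⟨v, hv₁⟩ : V₁) h10 f) (h10 f)
    rw [hw₁, zero_mul]
    refine Finset.sum_eq_zero fun g _ => ?_
    by_cases hfg : f ⟨v, hv₁⟩ = g ⟨v, hv₂⟩
    · rw [if_pos hfg, glueWeight, glue_at_v V₁ V₂ v hv₁ hmem, if_pos hc, zero_mul]
    · rw [if_neg hfg]
  · have key : ∀ g : V₂ → Bool,
        (if f ⟨v, hv₁⟩ = g ⟨v, hv₂⟩ then
            glueWeight V₁ V₂ v hv₁ w₁ w₂ (glueFun V₁ V₂ hmem f g) *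
              ψ (fun i : V₁ => glueFun V₁ V₂ hmem f g i.1) else 0)
          = (if g ⟨v, hv₂⟩ = f ⟨v, hv₁⟩ then w₂ g else 0) *
              (w₁ f * ψ f / margFun w₁ ⟨v, hv₁⟩ (f ⟨v, hv₁⟩)) := by
      intro g
      by_cases hfg : f ⟨v, hv₁⟩ = g ⟨v, hv₂⟩
      · rw [if_pos hfg, if_pos hfg.symm, glueWeight, res₁_glue V₁ V₂ hmem,
          res₂_glue V₁ V₂ v hI hv₁ hv₂ hmem f g hfg,
          glue_at_v V₁ V₂ v hv₁ hmem, if_neg hc]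
        ring
      · rw [if_neg hfg, if_neg fun h => hfg h.symm, zero_mul]
    rw [Finset.sum_congr rfl fun g _ => key g, ← Finset.sum_mul]
    have : (∑ g : V₂ → Bool, if g ⟨v, hv₂⟩ = f ⟨v, hv₁⟩ then w₂ g else 0)
        = margFun w₁ ⟨v, hv₁⟩ (f ⟨v, hv₁⟩) := hmarg _
    rw [this, mul_comm, div_mul_cancel₀ _ hc]

include hI hv₂ hmem h10 h20 hmarg in
theorem glue_L2 (ψ : (V₂ → Bool) → ℝ) :
    (∑ h : V → Bool, glueWeight V₁ V₂ v hv₁ w₁ w₂ h * ψ (fun j : V₂ => h j.1))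
      = ∑ g : V₂ → Bool, w₂ g * ψ g := by
  rw [sum_glue V₁ V₂ v hI hv₁ hv₂ hmem, Finset.sum_comm]
  refine Finset.sum_congr rfl fun g _ => ?_
  by_cases hc : margFun w₁ ⟨v, hv₁⟩ (g ⟨v, hv₂⟩) = 0
  · have hw₂ : w₂ g = 0 := by
      have h1 := le_margFun w₂ (⟨v, hv₂⟩ : V₂) h20 g
      rw [hmarg] at h1
      exact le_antisymm (hc ▸ h1) (h20 g)
    rw [hw₂, zero_mul]
    refine Finset.sum_eq_zero fun f _ => ?_
    by_cases hfg : f ⟨v, hv₁⟩ = g ⟨v, hv₂⟩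
    · rw [if_pos hfg, glueWeight, glue_at_v V₁ V₂ v hv₁ hmem, hfg, if_pos hc, zero_mul]
    · rw [if_neg hfg]
  · have key : ∀ f : V₁ → Bool,
        (if f ⟨v, hv₁⟩ = g ⟨v, hv₂⟩ then
            glueWeight V₁ V₂ v hv₁ w₁ w₂ (glueFun V₁ V₂ hmem f g) *
              ψ (fun j : V₂ => glueFun V₁ V₂ hmem f g j.1) else 0)
          = (if f ⟨v, hv₁⟩ = g ⟨v, hv₂⟩ then w₁ f else 0) *
              (w₂ g * ψ g / margFun w₁ ⟨v, hv₁⟩ (g ⟨v, hv₂⟩)) := by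
      intro f
      by_cases hfg : f ⟨v, hv₁⟩ = g ⟨v, hv₂⟩
      · rw [if_pos hfg, if_pos hfg, glueWeight, res₁_glue V₁ V₂ hmem,
          res₂_glue V₁ V₂ v hI hv₁ hv₂ hmem f g hfg,
          glue_at_v V₁ V₂ v hv₁ hmem, hfg, if_neg hc]
        ring
      · rw [if_neg hfg, if_neg hfg, zero_mul]
    rw [Finset.sum_congr rfl fun f _ => key f, ← Finset.sum_mul]
    have : (∑ f : V₁ → Bool, if f ⟨v, hv₁⟩ = g ⟨v, hv₂⟩ then w₁ f else 0)
        = margFun w₁ ⟨v, hv₁⟩ (g ⟨v, hv₂⟩) := rfl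
    rw [this, mul_comm, div_mul_cancel₀ _ hc]

end glue

theorem cor_glue {V : Type} [Fintype V] [DecidableEq V] (G : SimpleGraph V)
    [DecidableRel G.Adj] (V₁ V₂ : Set V) [DecidablePred (· ∈ V₁)] [DecidablePred (· ∈ V₂)]
    (v : V) (hU : V₁ ∪ V₂ = Set.univ) (hI : V₁ ∩ V₂ = {v})
    (hE : ∀ e ∈ G.edgeSet, (∀ x ∈ e, x ∈ V₁) ∨ (∀ x ∈ e, x ∈ V₂))
    [DecidableRel (G.induce V₁).Adj] [DecidableRel (G.induce V₂).Adj]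
    (p : V → ℝ) (q : G.edgeSet → ℝ) :
      (p, q) ∈ cor G ↔
        (((fun i : V₁ => p i),
            fun e => q ((SimpleGraph.Embedding.induce (G := G) V₁).mapEdgeSet e)) ∈
              cor (G.induce V₁) ∧
         ((fun i : V₂ => p i),
            fun e => q ((SimpleGraph.Embedding.induce (G := G) V₂).mapEdgeSet e)) ∈
              cor (G.induce V₂)) := by
  have hv : v ∈ V₁ ∩ V₂ := by rw [hI]; rfl
  have hmem : ∀ x, x ∉ V₁ → x ∈ V₂ := by
    intro x hx
    have : x ∈ V₁ ∪ V₂ := by rw [hU]; trivial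
    exact this.resolve_left hx
  rw [mem_cor_iff, mem_cor_iff, mem_cor_iff]
  constructor
  · rintro ⟨w, h0, h1, hvx, he⟩
    have transfer : ∀ (s : Set V) [DecidablePred (· ∈ s)] (ψ : (s → Bool) → ℝ),
        (∑ f : s → Bool, (∑ h : V → Bool, if (fun i : s => h i.1) = f then w h else 0) * ψ f)
          = ∑ h : V → Bool, w h * ψ (fun i : s => h i.1) := by
      intro s _ ψ
      simp_rw [Finset.sum_mul, ite_mul, zero_mul]
      rw [Finset.sum_comm]
      simp
    constructor
    · refine ⟨fun f => ∑ h : V → Bool, if (fun i : V₁ => h i.1) = f then w h else 0,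
        fun f => Finset.sum_nonneg fun h _ => ite_nonneg' (h0 h), ?_, ?_, ?_⟩
      · have := transfer V₁ (fun _ => 1)
        simpa using this.trans (by simpa using h1)
      · intro i
        exact (transfer V₁ (fun f => if f i then 1 else 0)).trans (hvx i.1)
      · intro e
        refine (transfer V₁ (fun f => (corPoint (G.induce V₁) f).2 e)).trans ?_
        calc ∑ h : V → Bool, w h * (corPoint (G.induce V₁) (fun i : V₁ => h i.1)).2 e
            = ∑ h : V → Bool, w h *
              (corPoint G h).2 ((SimpleGraph.Embedding.induce (G := G) V₁).mapEdgeSet e) := by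
              refine Finset.sum_congr rfl fun h _ => ?_
              rw [corPoint_res]
          _ = q ((SimpleGraph.Embedding.induce (G := G) V₁).mapEdgeSet e) := he _
    · refine ⟨fun f => ∑ h : V → Bool, if (fun i : V₂ => h i.1) = f then w h else 0,
        fun f => Finset.sum_nonneg fun h _ => ite_nonneg' (h0 h), ?_, ?_, ?_⟩
      · have := transfer V₂ (fun _ => 1)
        simpa using this.trans (by simpa using h1)
      · intro i
        exact (transfer V₂ (fun f => if f i then 1 else 0)).trans (hvx i.1)
      · intro e
        refine (transfer V₂ (fun f => (corPoint (G.induce V₂) f).2 e)).trans ?_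
        calc ∑ h : V → Bool, w h * (corPoint (G.induce V₂) (fun i : V₂ => h i.1)).2 e
            = ∑ h : V → Bool, w h *
              (corPoint G h).2 ((SimpleGraph.Embedding.induce (G := G) V₂).mapEdgeSet e) := by
              refine Finset.sum_congr rfl fun h _ => ?_
              rw [corPoint_res]
          _ = q ((SimpleGraph.Embedding.induce (G := G) V₂).mapEdgeSet e) := he _
  · rintro ⟨⟨w₁, h10, h11, h1v, h1e⟩, ⟨w₂, h20, h21, h2v, h2e⟩⟩
    have hct : margFun w₁ (⟨v, hv.1⟩ : V₁) true = p v := by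
      rw [margFun_true]
      exact h1v ⟨v, hv.1⟩
    have hc₂t : margFun w₂ (⟨v, hv.2⟩ : V₂) true = p v := by
      rw [margFun_true]
      exact h2v ⟨v, hv.2⟩
    have hcsum : margFun w₁ (⟨v, hv.1⟩ : V₁) true + margFun w₁ (⟨v, hv.1⟩ : V₁) false = 1 := by
      rw [margFun_add, h11]
    have hc₂sum : margFun w₂ (⟨v, hv.2⟩ : V₂) true + margFun w₂ (⟨v, hv.2⟩ : V₂) false = 1 := by
      rw [margFun_add, h21]
    have hmarg : ∀ b, margFun w₂ (⟨v, hv.2⟩ : V₂) b = margFun w₁ (⟨v, hv.1⟩ : V₁) b := by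
      intro b
      cases b
      · linarith
      · rw [hc₂t, hct]
    refine ⟨glueWeight V₁ V₂ v hv.1 w₁ w₂, ?_, ?_, ?_, ?_⟩
    · intro h
      rw [glueWeight]
      split
      · exact le_refl 0
      · exact div_nonneg (mul_nonneg (h10 _) (h20 _)) (margFun_nonneg w₁ _ h10 _)
    · have := glue_L1 V₁ V₂ v hI hv.1 hv.2 hmem w₁ w₂ h10 h20 hmarg (fun _ => 1)
      simpa using this.trans (by simpa using h11)
    · intro i
      by_cases hi : i ∈ V₁
      · exact (glue_L1 V₁ V₂ v hI hv.1 hv.2 hmem w₁ w₂ h10 h20 hmarg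
          (fun f => if f ⟨i, hi⟩ then 1 else 0)).trans (h1v ⟨i, hi⟩)
      · have hi₂ : i ∈ V₂ := hmem i hi
        exact (glue_L2 V₁ V₂ v hI hv.1 hv.2 hmem w₁ w₂ h10 h20 hmarg
          (fun g => if g ⟨i, hi₂⟩ then 1 else 0)).trans (h2v ⟨i, hi₂⟩)
    · rintro ⟨es, he⟩
      induction es using Sym2.ind with
      | _ x y =>
        rcases hE s(x, y) he with h₁ | h₂
        · have hx : x ∈ V₁ := h₁ x (Sym2.mem_mk_left x y)
          have hy : y ∈ V₁ := h₁ y (Sym2.mem_mk_right x y)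
          calc (∑ h : V → Bool, glueWeight V₁ V₂ v hv.1 w₁ w₂ h * (corPoint G h).2 ⟨s(x, y), he⟩)
              = ∑ h : V → Bool, glueWeight V₁ V₂ v hv.1 w₁ w₂ h *
                (corPoint (G.induce V₁) (fun i : V₁ => h i.1)).2
                  ⟨s(⟨x, hx⟩, ⟨y, hy⟩), induce_mem_edgeSet G V₁ he hx hy⟩ := by
                refine Finset.sum_congr rfl fun h _ => ?_
                rw [corPoint_res, mapEdgeSet_induce_mk]
            _ = ∑ f : V₁ → Bool, w₁ f * (corPoint (G.induce V₁) f).2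
                  ⟨s(⟨x, hx⟩, ⟨y, hy⟩), induce_mem_edgeSet G V₁ he hx hy⟩ :=
                glue_L1 V₁ V₂ v hI hv.1 hv.2 hmem w₁ w₂ h10 h20 hmarg
                  (fun f => (corPoint (G.induce V₁) f).2
                    ⟨s(⟨x, hx⟩, ⟨y, hy⟩), induce_mem_edgeSet G V₁ he hx hy⟩)
            _ = q ((SimpleGraph.Embedding.induce (G := G) V₁).mapEdgeSet
                  ⟨s(⟨x, hx⟩, ⟨y, hy⟩), induce_mem_edgeSet G V₁ he hx hy⟩) := h1e _
            _ = q ⟨s(x, y), he⟩ := by rw [mapEdgeSet_induce_mk]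
        · have hx : x ∈ V₂ := h₂ x (Sym2.mem_mk_left x y)
          have hy : y ∈ V₂ := h₂ y (Sym2.mem_mk_right x y)
          calc (∑ h : V → Bool, glueWeight V₁ V₂ v hv.1 w₁ w₂ h * (corPoint G h).2 ⟨s(x, y), he⟩)
              = ∑ h : V → Bool, glueWeight V₁ V₂ v hv.1 w₁ w₂ h *
                (corPoint (G.induce V₂) (fun j : V₂ => h j.1)).2
                  ⟨s(⟨x, hx⟩, ⟨y, hy⟩), induce_mem_edgeSet G V₂ he hx hy⟩ := by
                refine Finset.sum_congr rfl fun h _ => ?_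
                rw [corPoint_res, mapEdgeSet_induce_mk]
            _ = ∑ g : V₂ → Bool, w₂ g * (corPoint (G.induce V₂) g).2
                  ⟨s(⟨x, hx⟩, ⟨y, hy⟩), induce_mem_edgeSet G V₂ he hx hy⟩ :=
                glue_L2 V₁ V₂ v hI hv.1 hv.2 hmem w₁ w₂ h10 h20 hmarg
                  (fun g => (corPoint (G.induce V₂) g).2
                    ⟨s(⟨x, hx⟩, ⟨y, hy⟩), induce_mem_edgeSet G V₂ he hx hy⟩)
            _ = q ((SimpleGraph.Embedding.induce (G := G) V₂).mapEdgeSet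
                  ⟨s(⟨x, hx⟩, ⟨y, hy⟩), induce_mem_edgeSet G V₂ he hx hy⟩) := h2e _
            _ = q ⟨s(x, y), he⟩ := by rw [mapEdgeSet_induce_mk]

theorem edge_not_all_v {V : Type} (G : SimpleGraph V) (v : V) (e : G.edgeSet)
    (hsub : ∀ z ∈ (e : Sym2 V), z = v) : False := by
  obtain ⟨es, he⟩ := e
  induction es using Sym2.ind with
  | _ x y =>
    have hx := hsub x (Sym2.mem_mk_left x y)
    have hy := hsub y (Sym2.mem_mk_right x y)
    rw [hx, hy, SimpleGraph.mem_edgeSet] at he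
    exact G.loopless.irrefl v he

end CorAux

/-- If `G` is obtained by gluing the induced subgraphs `G₁ = G[V₁]` and `G₂ = G[V₂]` along a
single vertex `v` (every edge lying inside `V₁` or inside `V₂`), then `(p, q) ∈ COR(G)` iff
both restrictions belong to the respective correlation polytopes; consequently, for
`p : V → [0,1]` the slice of `COR(G)` is (up to the identification `E = E₁ ⊔ E₂`) the product
of the two slices, and its volume is the product of their volumes. -/
theorem stmt18 {V : Type} [Fintype V] [DecidableEq V] (G : SimpleGraph V)
    [DecidableRel G.Adj] (V₁ V₂ : Set V) [DecidablePred (· ∈ V₁)] [DecidablePred (· ∈ V₂)]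
    (v : V) (hU : V₁ ∪ V₂ = Set.univ) (hI : V₁ ∩ V₂ = {v})
    (hE : ∀ e ∈ G.edgeSet, (∀ x ∈ e, x ∈ V₁) ∨ (∀ x ∈ e, x ∈ V₂))
    [DecidableRel (G.induce V₁).Adj] [DecidableRel (G.induce V₂).Adj] :
    (∀ (p : V → ℝ) (q : G.edgeSet → ℝ),
      (p, q) ∈ cor G ↔
        (((fun i : V₁ => p i),
            fun e => q ((SimpleGraph.Embedding.induce (G := G) V₁).mapEdgeSet e)) ∈
              cor (G.induce V₁) ∧
         ((fun i : V₂ => p i),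
            fun e => q ((SimpleGraph.Embedding.induce (G := G) V₂).mapEdgeSet e)) ∈
              cor (G.induce V₂))) ∧
    (∀ p : V → ℝ, (∀ i, 0 ≤ p i ∧ p i ≤ 1) →
      volume {q : G.edgeSet → ℝ | (p, q) ∈ cor G} =
        volume {q₁ : (G.induce V₁).edgeSet → ℝ | ((fun i : V₁ => p i), q₁) ∈ cor (G.induce V₁)} *
        volume {q₂ : (G.induce V₂).edgeSet → ℝ | ((fun i : V₂ => p i), q₂) ∈ cor (G.induce V₂)}) := by
  refine ⟨CorAux.cor_glue G V₁ V₂ v hU hI hE, ?_⟩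
  intro p _
  have hbij : Function.Bijective
      (Sum.elim (fun e => (SimpleGraph.Embedding.induce (G := G) V₁).mapEdgeSet e)
        (fun e => (SimpleGraph.Embedding.induce (G := G) V₂).mapEdgeSet e) :
        (G.induce V₁).edgeSet ⊕ (G.induce V₂).edgeSet → G.edgeSet) := by
    constructor
    · rintro (e₁ | e₁) (e₂ | e₂) h <;>
        simp only [Sum.elim_inl, Sum.elim_inr] at h
      · exact congrArg Sum.inl ((SimpleGraph.Embedding.induce
          (G := G) V₁).mapEdgeSet.injective h)
      · exfalso
        refine CorAux.edge_not_all_v G v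
          ((SimpleGraph.Embedding.induce (G := G) V₁).mapEdgeSet e₁) fun z hz => ?_
        have h1 : z ∈ V₁ := CorAux.mem_of_mem_mapEdgeSet G V₁ e₁ z hz
        have h2 : z ∈ V₂ := CorAux.mem_of_mem_mapEdgeSet G V₂ e₂ z (by rw [← h]; exact hz)
        have : z ∈ V₁ ∩ V₂ := ⟨h1, h2⟩
        rw [hI] at this
        exact this
      · exfalso
        refine CorAux.edge_not_all_v G v
          ((SimpleGraph.Embedding.induce (G := G) V₂).mapEdgeSet e₁) fun z hz => ?_
        have h1 : z ∈ V₂ := CorAux.mem_of_mem_mapEdgeSet G V₂ e₁ z hz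
        have h2 : z ∈ V₁ := CorAux.mem_of_mem_mapEdgeSet G V₁ e₂ z (by rw [← h]; exact hz)
        have : z ∈ V₁ ∩ V₂ := ⟨h2, h1⟩
        rw [hI] at this
        exact this
      · exact congrArg Sum.inr ((SimpleGraph.Embedding.induce
          (G := G) V₂).mapEdgeSet.injective h)
    · rintro ⟨es, he⟩
      induction es using Sym2.ind with
      | _ x y =>
        rcases hE s(x, y) he with h₁ | h₂
        · have hx : x ∈ V₁ := h₁ x (Sym2.mem_mk_left x y)
          have hy : y ∈ V₁ := h₁ y (Sym2.mem_mk_right x y)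
          exact ⟨Sum.inl ⟨s(⟨x, hx⟩, ⟨y, hy⟩), CorAux.induce_mem_edgeSet G V₁ he hx hy⟩,
            CorAux.mapEdgeSet_induce_mk G V₁ hx hy he⟩
        · have hx : x ∈ V₂ := h₂ x (Sym2.mem_mk_left x y)
          have hy : y ∈ V₂ := h₂ y (Sym2.mem_mk_right x y)
          exact ⟨Sum.inr ⟨s(⟨x, hx⟩, ⟨y, hy⟩), CorAux.induce_mem_edgeSet G V₂ he hx hy⟩,
            CorAux.mapEdgeSet_induce_mk G V₂ hx hy he⟩
  set σ : (G.induce V₁).edgeSet ⊕ (G.induce V₂).edgeSet ≃ G.edgeSet :=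
    Equiv.ofBijective _ hbij with hσ
  set T := (MeasurableEquiv.piCongrLeft (fun _ : G.edgeSet => ℝ) σ).symm.trans
      (MeasurableEquiv.sumPiEquivProdPi (fun _ => ℝ)) with hT
  have mT : MeasurePreserving T volume volume :=
    (volume_measurePreserving_sumPiEquivProdPi _).comp
      ((volume_measurePreserving_piCongrLeft _ σ).symm _)
  have hS₁ : IsClosed {q₁ : (G.induce V₁).edgeSet → ℝ |
      ((fun i : V₁ => p i), q₁) ∈ cor (G.induce V₁)} :=
    ((Set.finite_range _).isClosed_convexHull (𝕜 := ℝ)).preimage (Continuous.prodMk_right _)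
  have hS₂ : IsClosed {q₂ : (G.induce V₂).edgeSet → ℝ |
      ((fun i : V₂ => p i), q₂) ∈ cor (G.induce V₂)} :=
    ((Set.finite_range _).isClosed_convexHull (𝕜 := ℝ)).preimage (Continuous.prodMk_right _)
  have key : {q : G.edgeSet → ℝ | (p, q) ∈ cor G} =
      T ⁻¹' (({q₁ : (G.induce V₁).edgeSet → ℝ |
          ((fun i : V₁ => p i), q₁) ∈ cor (G.induce V₁)}) ×ˢ
        ({q₂ : (G.induce V₂).edgeSet → ℝ |
          ((fun i : V₂ => p i), q₂) ∈ cor (G.induce V₂)})) := by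
    ext q
    simp only [Set.mem_setOf_eq, Set.mem_preimage, Set.mem_prod]
    rw [CorAux.cor_glue G V₁ V₂ v hU hI hE p q]
    exact Iff.rfl
  rw [key, mT.measure_preimage
      (hS₁.measurableSet.prod hS₂.measurableSet).nullMeasurableSet,
    Measure.volume_eq_prod, Measure.prod_prod]
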